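/- Let (Ω, ℱ, μ) be a probability space, let E : Ω → ℰ be a random variable taking values in a finite set ℰ, let η : Ω → ℝ be independent of E with 𝔼[η] = 0 and |η| ≤ K/2 almost surely for some K < ∞, and let f : ℰ → ℝ. Define Π = f(E) + η. Suppose e* ∈ ℰ satisfies μ(E = e*) > 0, and suppose a ≤ b are real numbers such that [f(e*) − K/2, f(e*) + K/2] ⊆ [a, b] and, for every e ≠ e* with μ(E = e) > 0, [f(e) − K/2, f(e) + K/2] ∩ [a, b] = ∅. Then μ(a ≤ Π ≤ b) > 0 and 𝔼[Π | a ≤ Π ≤ b] = f(e*). -/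

import Mathlib

open MeasureTheory ProbabilityTheory

/-- Conditional-mean separation step in the proof of Theorem 3.1: with bounded,
mean-zero measurement error independent of the finite-valued productivity type, if the
interval `[a,b]` separates the profit of type `e*` from the profits of all other types
present, then the event `{a ≤ Π ≤ b}` has positive probability and the conditional mean
of the observed profit `Π = f(E) + η` on that event equals `f(e*)`. -/
theorem stmt13 {Ω : Type*} [MeasurableSpace Ω] (μ : Measure Ω) [IsProbabilityMeasure μ]
    {ℰ : Type*} [Fintype ℰ] [MeasurableSpace ℰ] [MeasurableSingletonClass ℰ]
    (E : Ω → ℰ) (hEmeas : Measurable E)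
    (eta : Ω → ℝ) (hetameas : Measurable eta)
    (hindep : IndepFun E eta μ)
    (hmean : ∫ ω, eta ω ∂μ = 0)
    (K : ℝ) (hbound : ∀ᵐ ω ∂μ, |eta ω| ≤ K / 2)
    (f : ℰ → ℝ) (estar : ℰ) (hestar : 0 < μ (E ⁻¹' {estar}))
    (a b : ℝ) (hab : a ≤ b)
    (hsep1 : Set.Icc (f estar - K / 2) (f estar + K / 2) ⊆ Set.Icc a b)
    (hsep2 : ∀ e : ℰ, e ≠ estar → 0 < μ (E ⁻¹' {e}) →
      Set.Icc (f e - K / 2) (f e + K / 2) ∩ Set.Icc a b = ∅) :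
    0 < μ {ω | f (E ω) + eta ω ∈ Set.Icc a b} ∧
    ∫ ω, (f (E ω) + eta ω) ∂(μ[|{ω | f (E ω) + eta ω ∈ Set.Icc a b}]) = f estar := by
  classical
  set A := {ω | f (E ω) + eta ω ∈ Set.Icc a b} with hA
  set S := E ⁻¹' {estar} with hS
  have hfE : Measurable fun ω => f (E ω) := (measurable_of_countable f).comp hEmeas
  have hPim : Measurable fun ω => f (E ω) + eta ω := hfE.add hetameas
  have hAmeas : MeasurableSet A := hPim measurableSet_Icc
  have hSmeas : MeasurableSet S := hEmeas (measurableSet_singleton _)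
  have hnull : ∀ᵐ ω ∂μ, μ (E ⁻¹' {E ω}) ≠ 0 := by
    rw [ae_iff]
    have hsub : {ω | ¬ μ (E ⁻¹' {E ω}) ≠ 0} ⊆
        ⋃ e ∈ {e : ℰ | μ (E ⁻¹' {e}) = 0}, E ⁻¹' {e} := by
      intro ω hω
      exact Set.mem_biUnion (by simpa using hω) rfl
    refine measure_mono_null hsub ?_
    exact (measure_biUnion_null_iff (Set.to_countable _)).mpr fun e he => he
  have hAE : A =ᵐ[μ] S := by
    rw [Filter.eventuallyEq_set]
    filter_upwards [hbound, hnull] with ω hb hn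
    constructor
    · intro hωA
      by_contra hωS
      have hne : E ω ≠ estar := by simpa [hS] using hωS
      have hpos : 0 < μ (E ⁻¹' {E ω}) := hn.bot_lt
      have hmem : f (E ω) + eta ω ∈
          Set.Icc (f (E ω) - K / 2) (f (E ω) + K / 2) ∩ Set.Icc a b := by
        refine ⟨?_, hωA⟩
        have := abs_le.mp hb
        constructor <;> linarith [this.1, this.2]
      rw [hsep2 (E ω) hne hpos] at hmem
      exact hmem
    · intro hωS
      have heq : E ω = estar := hωS
      have : f (E ω) + eta ω ∈ Set.Icc (f estar - K / 2) (f estar + K / 2) := by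
        have := abs_le.mp hb
        rw [heq]
        constructor <;> linarith [this.1, this.2]
      exact hsep1 this
  have hμAS : μ A = μ S := measure_congr hAE
  have hApos : 0 < μ A := hμAS ▸ hestar
  refine ⟨hApos, ?_⟩
  -- integrability facts
  have hbound' : ∀ᵐ ω ∂μ, ‖eta ω‖ ≤ K / 2 := by simpa using hbound
  have hηint : Integrable eta μ :=
    (integrable_const (K / 2)).mono' hetameas.aestronglyMeasurable hbound'
  have hXeq : (fun ω => Set.indicator ({estar} : Set ℰ) (fun _ => (1 : ℝ)) (E ω))
      = S.indicator (fun _ => (1 : ℝ)) := by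
    funext ω
    simp only [Set.indicator_apply, hS, Set.mem_preimage]
  have hXindep : IndepFun (S.indicator (fun _ => (1 : ℝ))) eta μ := by
    have h := hindep.comp
      (measurable_of_countable (Set.indicator ({estar} : Set ℰ) (fun _ => (1 : ℝ))))
      (measurable_id (α := ℝ))
    rw [← hXeq]
    exact h
  have hXint : Integrable (S.indicator (fun _ => (1 : ℝ))) μ :=
    (integrable_const (1 : ℝ)).indicator hSmeas
  have hSeta : ∫ ω in S, eta ω ∂μ = 0 := by
    have h1 : ∫ ω, S.indicator (fun _ => (1 : ℝ)) ω * eta ω ∂μ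
        = (∫ ω, S.indicator (fun _ => (1 : ℝ)) ω ∂μ) * ∫ ω, eta ω ∂μ :=
      hXindep.integral_fun_mul_eq_mul_integral hXint.aestronglyMeasurable hηint.aestronglyMeasurable
    have h2 : (fun ω => S.indicator (fun _ => (1 : ℝ)) ω * eta ω) = S.indicator eta := by
      funext ω
      by_cases h : ω ∈ S
      · simp [Set.indicator_of_mem h]
      · simp [Set.indicator_of_notMem h]
    rw [h2, hmean, mul_zero] at h1
    rwa [← integral_indicator hSmeas]
  -- compute
  have hrs : μ.restrict A = μ.restrict S := Measure.restrict_congr_set hAE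
  have hcongr : ∫ ω in S, (f (E ω) + eta ω) ∂μ
      = ∫ ω in S, (f estar + eta ω) ∂μ := by
    refine setIntegral_congr_fun hSmeas fun ω hω => ?_
    have : E ω = estar := hω
    rw [this]
  have hsplit : ∫ ω in S, (f estar + eta ω) ∂μ = (μ S).toReal * f estar := by
    rw [integral_add (integrable_const _) hηint.integrableOn, hSeta, add_zero,
      setIntegral_const, smul_eq_mul]
    rfl
  have hSnz : (μ S).toReal ≠ 0 := by
    have h1 : μ S ≠ 0 := hestar.ne'
    have h2 : μ S ≠ ⊤ := measure_ne_top μ S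
    simp [ENNReal.toReal_eq_zero_iff, h1, h2]
  rw [ProbabilityTheory.cond, integral_smul_measure, hrs, hcongr, hsplit, hμAS,
    ENNReal.toReal_inv, smul_eq_mul]
  field_simp
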